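/- Let R ≥ 0, c ≥ 0, and let W: {2,3,4,…} → ℝ satisfy W(2) ≤ R and W(n+1) ≤ ((n+1)/(2n))·(W(n) + c·n) for all n ≥ 2. Then W(n) ≤ (n−1)·R/2^{n−2} + c·n²/2 for all n ≥ 2. -/
import Mathlib


/-- The recursive welfare bound from Theorem 3.1: if `W(2) ≤ R` and
`W(n+1) ≤ ((n+1)/(2n))·(W(n) + c·n)` for all `n ≥ 2`, then
`W(n) ≤ (n−1)·R/2^{n−2} + c·n²/2` for all `n ≥ 2`. -/
theorem stmt_12 (R c : ℝ) (hR : 0 ≤ R) (hc : 0 ≤ c) (W : ℕ → ℝ)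
    (h2 : W 2 ≤ R)
    (hrec : ∀ n : ℕ, 2 ≤ n →
      W (n + 1) ≤ (((n : ℝ) + 1) / (2 * n)) * (W n + c * n)) :
    ∀ n : ℕ, 2 ≤ n →
      W n ≤ ((n : ℝ) - 1) * R / 2 ^ (n - 2) + c * (n : ℝ) ^ 2 / 2 := by
  intro n hn
  induction n, hn using Nat.le_induction with
  | base =>
      norm_num
      linarith
  | succ n hn ih =>
      obtain ⟨k, rfl⟩ : ∃ k, n = k + 2 := ⟨n - 2, by omega⟩
      have hrecn := hrec (k + 2) (by omega)
      simp only [Nat.add_sub_cancel] at ih ⊢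
      push_cast at hrecn ih ⊢
      set x : ℝ := (k : ℝ) + 2 with hxdef
      clear_value x
      have hx : (0:ℝ) < x := by rw [hxdef]; positivity
      have hP : (0:ℝ) < 2 ^ k := by positivity
      have hcoef : (0:ℝ) ≤ (x + 1) / (2 * x) := by positivity
      have step : W (k + 2 + 1) ≤ ((x + 1) / (2 * x)) *
          (((x - 1) * R / 2 ^ k + c * x ^ 2 / 2) + c * x) := by
        refine hrecn.trans ?_
        apply mul_le_mul_of_nonneg_left _ hcoef
        linarith [ih]
      refine step.trans ?_
      rw [div_mul_eq_mul_div, div_le_iff₀ (by positivity : (0:ℝ) < 2 * x)]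
      have expand : ((x + 1 - 1) * R / 2 ^ (k + 1) + c * (x + 1) ^ 2 / 2) * (2 * x)
          = x ^ 2 * R / 2 ^ k + c * x * (x + 1) ^ 2 := by
        rw [pow_succ]
        field_simp
        ring
      rw [expand]
      have h1 : (x + 1) * ((x - 1) * R / 2 ^ k) ≤ x ^ 2 * R / 2 ^ k := by
        rw [mul_div_assoc', div_le_div_iff_of_pos_right hP]
        nlinarith
      have h2' : (x + 1) * (c * x ^ 2 / 2 + c * x) ≤ c * x * (x + 1) ^ 2 := by
        nlinarith [mul_nonneg (mul_nonneg hc (by positivity : (0:ℝ) ≤ x + 1))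
          (by positivity : (0:ℝ) ≤ x ^ 2)]
      nlinarith [h1, h2']
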